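/- Fix K'* ⊆ 𝒦 with ∁K'* = 𝒦∖K'* and suppose R* := I(X_{K'*}; Y | X_{∁K'*}) − I(X_{K'*}; Z | X_{∁K'*}) > 0. Let (R_1^s, R_1^o, …, R_K^s, R_K^o) be a tuple of nonnegative reals with R_k^s = 0 for all k ∈ ∁K'* which satisfies, for all S ⊆ K'*, S' ⊆ S, and T ⊆ ∁K'*, ∑_{k∈S} R_k^s + ∑_{k∈S∖S'} R_k^o + ∑_{k∈T} R_k^o ≤ [I(X_S, X_T; Y | X_{K'*∖S}, X_{∁K'*∖T}) − I(X_{S'}; Z | X_{∁K'*})]^+, and suppose ∑_{k∈K'*} R_k^s = R*. Then ∑_{k∈K'*} R_k^o ≤ I(X_{K'*}; Z | X_{∁K'*}). -/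

import Mathlib

open MeasureTheory ProbabilityTheory BigOperators

/-- Shannon entropy (base 2) of a finitely-valued random variable. -/
noncomputable def entropy2 {Ω : Type*} [MeasurableSpace Ω] (μ : Measure Ω)
    {α : Type*} [Fintype α] (X : Ω → α) : ℝ :=
  - ∑ a : α, ((μ (X ⁻¹' {a})).toReal * Real.logb 2 (μ (X ⁻¹' {a})).toReal)

/-- Mutual information `I(X; Y)` (base 2) of finitely-valued random variables. -/
noncomputable def mi {Ω : Type*} [MeasurableSpace Ω] (μ : Measure Ω)
    {α β : Type*} [Fintype α] [Fintype β] (X : Ω → α) (Y : Ω → β) : ℝ :=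
  entropy2 μ X + entropy2 μ Y - entropy2 μ (fun ω => (X ω, Y ω))

/-- Conditional mutual information `I(X; Y | Z)` (base 2). -/
noncomputable def cmi {Ω : Type*} [MeasurableSpace Ω] (μ : Measure Ω)
    {α β γ : Type*} [Fintype α] [Fintype β] [Fintype γ]
    (X : Ω → α) (Y : Ω → β) (Z : Ω → γ) : ℝ :=
  entropy2 μ (fun ω => (X ω, Z ω)) + entropy2 μ (fun ω => (Y ω, Z ω))
    - entropy2 μ (fun ω => (X ω, Y ω, Z ω)) - entropy2 μ Z

/-- The tuple `X_S = (X_k)_{k ∈ S}` of a family of random variables. -/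
def tuple {Ω ι : Type*} {𝒳 : ι → Type*} (X : ∀ k, Ω → 𝒳 k) (S : Finset ι) :
    Ω → ((k : S) → 𝒳 k) :=
  fun ω k => X k ω

lemma entropy2_comp {Ω : Type*} [MeasurableSpace Ω] (μ : Measure Ω)
    {α β : Type*} [Fintype α] [Fintype β] (X : Ω → α) (f : α → β)
    (hf : Function.Injective f) :
    entropy2 μ (fun ω => f (X ω)) = entropy2 μ X := by
  classical
  unfold entropy2
  congr 1
  have h1 : ∀ a : α, (fun ω => f (X ω)) ⁻¹' {f a} = X ⁻¹' {a} := by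
    intro a; ext ω; simp [hf.eq_iff]
  calc ∑ b : β, ((μ ((fun ω => f (X ω)) ⁻¹' {b})).toReal *
          Real.logb 2 (μ ((fun ω => f (X ω)) ⁻¹' {b})).toReal)
      = ∑ b ∈ Finset.univ.image f, ((μ ((fun ω => f (X ω)) ⁻¹' {b})).toReal *
          Real.logb 2 (μ ((fun ω => f (X ω)) ⁻¹' {b})).toReal) := by
        refine (Finset.sum_subset (Finset.subset_univ _) ?_).symm
        intro b _ hb
        have : (fun ω => f (X ω)) ⁻¹' {b} = ∅ := by
          ext ω; simp only [Set.mem_preimage, Set.mem_singleton_iff, Set.mem_empty_iff_false,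
            iff_false]
          intro h
          exact hb (Finset.mem_image.mpr ⟨X ω, Finset.mem_univ _, h⟩)
        simp [this]
    _ = ∑ a : α, ((μ ((fun ω => f (X ω)) ⁻¹' {f a})).toReal *
          Real.logb 2 (μ ((fun ω => f (X ω)) ⁻¹' {f a})).toReal) :=
        Finset.sum_image (fun a _ b _ h => hf h)
    _ = ∑ a : α, ((μ (X ⁻¹' {a})).toReal * Real.logb 2 (μ (X ⁻¹' {a})).toReal) := by
        simp only [h1]

lemma cmi_const {Ω : Type*} [MeasurableSpace Ω] (μ : Measure Ω)
    {α β γ : Type*} [Fintype α] [Fintype β] [Fintype γ]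
    (c : α) (Z : Ω → β) (W : Ω → γ) :
    cmi μ (fun _ => c) Z W = 0 := by
  have hinj : Function.Injective (fun w : γ => (c, w)) := by
    intro a b h; simpa using h
  have hinj2 : Function.Injective (fun p : β × γ => (c, p.1, p.2)) := by
    intro a b h
    simp only [Prod.mk.injEq, true_and] at h
    exact Prod.ext h.1 h.2
  unfold cmi
  have e1 : entropy2 μ (fun ω => ((fun _ => c) ω, W ω)) = entropy2 μ W :=
    entropy2_comp μ W (fun w => (c, w)) hinj
  have e2 : entropy2 μ (fun ω => ((fun _ => c) ω, Z ω, W ω))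
      = entropy2 μ (fun ω => (Z ω, W ω)) :=
    entropy2_comp μ (fun ω => (Z ω, W ω)) (fun p => (c, p.1, p.2)) hinj2
  rw [e1, e2]
  ring

lemma cmi_comp {Ω : Type*} [MeasurableSpace Ω] (μ : Measure Ω)
    {α β γ α' γ' : Type*} [Fintype α] [Fintype β] [Fintype γ] [Fintype α'] [Fintype γ']
    (A : Ω → α) (Yv : Ω → β) (B : Ω → γ) (f : α → α') (g : γ → γ')
    (hf : Function.Injective f) (hg : Function.Injective g) :
    cmi μ (fun ω => f (A ω)) Yv (fun ω => g (B ω)) = cmi μ A Yv B := by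
  have h1 : Function.Injective (fun p : α × γ => (f p.1, g p.2)) := by
    intro p q h
    simp only [Prod.mk.injEq] at h
    exact Prod.ext (hf h.1) (hg h.2)
  have h2 : Function.Injective (fun p : β × γ => (p.1, g p.2)) := by
    intro p q h
    simp only [Prod.mk.injEq] at h
    exact Prod.ext h.1 (hg h.2)
  have h3 : Function.Injective (fun p : α × β × γ => (f p.1, p.2.1, g p.2.2)) := by
    intro p q h
    simp only [Prod.mk.injEq] at h
    exact Prod.ext (hf h.1) (Prod.ext h.2.1 (hg h.2.2))
  unfold cmi
  have e1 : entropy2 μ (fun ω => (f (A ω), g (B ω)))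
      = entropy2 μ (fun ω => (A ω, B ω)) :=
    entropy2_comp μ (fun ω => (A ω, B ω)) (fun p => (f p.1, g p.2)) h1
  have e2 : entropy2 μ (fun ω => (Yv ω, g (B ω)))
      = entropy2 μ (fun ω => (Yv ω, B ω)) :=
    entropy2_comp μ (fun ω => (Yv ω, B ω)) (fun p => (p.1, g p.2)) h2
  have e3 : entropy2 μ (fun ω => (f (A ω), Yv ω, g (B ω)))
      = entropy2 μ (fun ω => (A ω, Yv ω, B ω)) :=
    entropy2_comp μ (fun ω => (A ω, Yv ω, B ω)) (fun p => (f p.1, p.2.1, g p.2.2)) h3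
  have e4 : entropy2 μ (fun ω => g (B ω)) = entropy2 μ B :=
    entropy2_comp μ B g hg
  rw [e1, e2, e3, e4]

theorem stmt_9
    {Ω : Type} [MeasurableSpace Ω] (μ : Measure Ω) [IsProbabilityMeasure μ]
    {K : ℕ} (hK : 0 < K)
    {𝒳 : Fin K → Type} [∀ k, Fintype (𝒳 k)] [∀ k, MeasurableSpace (𝒳 k)]
    (X : ∀ k, Ω → 𝒳 k) (hX : ∀ k, Measurable (X k))
    {𝒴 𝒵 : Type} [Fintype 𝒴] [MeasurableSpace 𝒴] [Fintype 𝒵] [MeasurableSpace 𝒵]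
    (Y : Ω → 𝒴) (hY : Measurable Y) (Z : Ω → 𝒵) (hZ : Measurable Z)
    (hIndep : iIndepFun X μ)
    (K'star : Finset (Fin K))
    (hpos : 0 < cmi μ (tuple X K'star) Y (tuple X K'starᶜ)
        - cmi μ (tuple X K'star) Z (tuple X K'starᶜ))
    (Rs Ro : Fin K → ℝ) (hRs : ∀ k, 0 ≤ Rs k) (hRo : ∀ k, 0 ≤ Ro k)
    (hRs0 : ∀ k ∈ K'starᶜ, Rs k = 0)
    (hRate : ∀ S ⊆ K'star, ∀ S' ⊆ S, ∀ T ⊆ K'starᶜ,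
      ∑ k ∈ S, Rs k + ∑ k ∈ S \ S', Ro k + ∑ k ∈ T, Ro k ≤
        max (cmi μ (fun ω => (tuple X S ω, tuple X T ω)) Y
              (fun ω => (tuple X (K'star \ S) ω, tuple X (K'starᶜ \ T) ω))
            - cmi μ (tuple X S') Z (tuple X K'starᶜ)) 0)
    (hsum : ∑ k ∈ K'star, Rs k =
      cmi μ (tuple X K'star) Y (tuple X K'starᶜ)
        - cmi μ (tuple X K'star) Z (tuple X K'starᶜ)) :
    ∑ k ∈ K'star, Ro k ≤ cmi μ (tuple X K'star) Z (tuple X K'starᶜ) := by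
  classical
  set a := cmi μ (tuple X K'star) Y (tuple X K'starᶜ) with ha
  set b := cmi μ (tuple X K'star) Z (tuple X K'starᶜ) with hb
  -- the constant value of the empty tuple
  let c : (k : (∅ : Finset (Fin K))) → 𝒳 k := fun k => absurd k.2 (Finset.notMem_empty _)
  have hconst : tuple X (∅ : Finset (Fin K)) = fun _ => c := by
    funext ω k
    exact absurd k.2 (Finset.notMem_empty _)
  have h := hRate K'star Finset.Subset.rfl ∅ (Finset.empty_subset _) ∅ (Finset.empty_subset _)
  simp only [Finset.sdiff_empty, Finset.sum_empty, add_zero, hconst] at h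
  -- re-coding maps
  set f : ((k : K'star) → 𝒳 k) → (((k : K'star) → 𝒳 k) × ((k : (∅ : Finset (Fin K))) → 𝒳 k)) :=
    fun w => (w, c) with hf_def
  have hf : Function.Injective f := by
    intro w w' hw
    exact congrArg Prod.fst hw
  set g : ((k : (K'starᶜ : Finset (Fin K))) → 𝒳 k) →
      (((k : (K'star \ K'star : Finset (Fin K))) → 𝒳 k) ×
        ((k : (K'starᶜ \ (∅ : Finset (Fin K)) : Finset (Fin K))) → 𝒳 k)) :=
    fun w => (fun k => absurd k.2 (by simp),
      fun k => w ⟨k.1, (Finset.mem_sdiff.mp k.2).1⟩) with hg_def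
  have hg : Function.Injective g := by
    intro w w' hw
    funext j
    have := congrFun (congrArg Prod.snd hw)
      ⟨j.1, Finset.mem_sdiff.mpr ⟨j.2, Finset.notMem_empty _⟩⟩
    exact this
  have hfun1 : (fun ω => (tuple X K'star ω, c)) = fun ω => f (tuple X K'star ω) := rfl
  have hfun2 : (fun ω => (tuple X (K'star \ K'star) ω,
      tuple X (K'starᶜ \ (∅ : Finset (Fin K))) ω)) = fun ω => g (tuple X K'starᶜ ω) := by
    funext ω
    refine Prod.ext ?_ ?_
    · funext k
      exact absurd k.2 (by simp)
    · rfl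
  rw [hfun1, hfun2, cmi_comp μ (tuple X K'star) Y (tuple X K'starᶜ) f g hf hg,
    cmi_const μ c Z (tuple X K'starᶜ), sub_zero, ← ha] at h
  have hRo' : 0 ≤ ∑ k ∈ K'star, Ro k := Finset.sum_nonneg fun k _ => hRo k
  rcases le_or_gt 0 a with h0 | h0
  · rw [max_eq_left h0] at h
    linarith
  · rw [max_eq_right h0.le] at h
    linarith
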